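/- For every α > 2 and every β > 0 there exists a constant C > 0 (depending only on α and β) with the following property: for every ℓ > 0, every positive integer s, and every finite set L of links in ℝ² each of length at most ℓ, if every axis-aligned square of side ℓ contains at most s endpoints of links of L, then L can be partitioned into at most C·s sets, each of which is β-feasible under uniform power with zero noise. -/

import Mathlib

open Finset
open scoped Classical ENNReal

/-- A finite set of links (sender–receiver pairs in the plane) is `β`-feasible under uniform
power with zero noise, for path-loss exponent `α`: for every link `(s,r)` in the set,
`dist(s,r)⁻ᵅ ≥ β · Σ_{(s',r') ≠ (s,r)} dist(s',r)⁻ᵅ` (computed in `ℝ≥0∞`, so that a zero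
distance correctly yields infinite interference). -/
def UniformFeasible (α β : ℝ)
    (F : Finset (EuclideanSpace ℝ (Fin 2) × EuclideanSpace ℝ (Fin 2))) : Prop :=
  ∀ l ∈ F, ENNReal.ofReal β *
      ∑ l' ∈ F.erase l, ENNReal.ofReal (dist l'.1 l.2) ^ (-α) ≤
    ENNReal.ofReal (dist l.1 l.2) ^ (-α)

/-- Membership in the closed axis-aligned square with lower-left corner `a` and side `t`. -/
def InSquare (a : EuclideanSpace ℝ (Fin 2)) (t : ℝ) (x : EuclideanSpace ℝ (Fin 2)) : Prop :=
  ∀ i, a i ≤ x i ∧ x i ≤ a i + t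

lemma floor_bounds {ℓ x : ℝ} (hℓ : 0 < ℓ) :
    (⌊x/ℓ⌋ : ℝ) * ℓ ≤ x ∧ x < (⌊x/ℓ⌋ : ℝ) * ℓ + ℓ := by
  constructor
  · have := mul_le_mul_of_nonneg_right (Int.floor_le (x/ℓ)) hℓ.le
    rwa [div_mul_cancel₀ _ hℓ.ne'] at this
  · have := mul_lt_mul_of_pos_right (Int.lt_floor_add_one (x/ℓ)) hℓ
    rw [div_mul_cancel₀ _ hℓ.ne'] at this
    linarith [this]

lemma floor_sep {ℓ x y : ℝ} (hℓ : 0 < ℓ) :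
    (|((⌊x/ℓ⌋ - ⌊y/ℓ⌋ : ℤ) : ℝ)| - 1) * ℓ ≤ |x - y| := by
  obtain ⟨hx1, hx2⟩ := floor_bounds (x := x) hℓ
  obtain ⟨hy1, hy2⟩ := floor_bounds (x := y) hℓ
  push_cast
  rcases abs_cases ((⌊x/ℓ⌋ : ℝ) - (⌊y/ℓ⌋ : ℝ)) with ⟨h, _⟩ | ⟨h, _⟩ <;> rw [h]
  · have : ((⌊x/ℓ⌋ : ℝ) - (⌊y/ℓ⌋ : ℝ) - 1) * ℓ ≤ x - y := by nlinarith
    exact this.trans (le_abs_self _)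
  · have h2 : (-((⌊x/ℓ⌋ : ℝ) - (⌊y/ℓ⌋ : ℝ)) - 1) * ℓ ≤ y - x := by nlinarith
    calc (-((⌊x/ℓ⌋ : ℝ) - (⌊y/ℓ⌋ : ℝ)) - 1) * ℓ ≤ y - x := h2
    _ ≤ |y - x| := le_abs_self _
    _ = |x - y| := abs_sub_comm _ _

lemma coord_le_dist (x y : EuclideanSpace ℝ (Fin 2)) (i : Fin 2) : |x i - y i| ≤ dist x y := by
  rw [EuclideanSpace.dist_eq, ← Real.sqrt_sq_eq_abs]
  apply Real.sqrt_le_sqrt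
  have h : (x i - y i) ^ 2 = dist (x i) (y i) ^ 2 := by rw [Real.dist_eq, sq_abs]
  rw [h]
  exact Finset.single_le_sum (f := fun j => dist (x j) (y j) ^ 2)
    (fun j _ => sq_nonneg _) (Finset.mem_univ i)

lemma summable_G {q : ℝ} (hq : 1 < q) : Summable (fun z : ℤ => (1 + |(z:ℝ)|) ^ (-q)) := by
  have hnat : Summable (fun n : ℕ => (1 + (n:ℝ)) ^ (-q)) := by
    have h0 : Summable (fun n : ℕ => (n:ℝ) ^ (-q)) := Real.summable_nat_rpow.2 (by linarith)
    have := (summable_nat_add_iff 1).2 h0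
    exact this.congr fun n => by push_cast; rw [add_comm]
  apply Summable.of_nat_of_neg
  · exact hnat.congr fun n => by rw [Int.cast_natCast, abs_of_nonneg (Nat.cast_nonneg n)]
  · exact hnat.congr fun n => by rw [Int.cast_neg, abs_neg, Int.cast_natCast,
      abs_of_nonneg (Nat.cast_nonneg n)]

noncomputable def rank {α : Type*} [DecidableEq α] (t : Finset α) (a : α) : ℕ :=
  t.toList.idxOf a

lemma rank_lt_card {α : Type*} [DecidableEq α] {t : Finset α} {a : α} (h : a ∈ t) :
    rank t a < t.card := by
  have := List.idxOf_lt_length_iff.2 ((Finset.mem_toList (s := t)).2 h)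
  rwa [Finset.length_toList] at this

lemma rank_inj {α : Type*} [DecidableEq α] {t : Finset α} {a b : α} (ha : a ∈ t) (hb : b ∈ t)
    (h : rank t a = rank t b) : a = b :=
  (List.idxOf_inj (y := b) ((Finset.mem_toList (s := t)).2 ha)).1 h


set_option maxHeartbeats 1600000

/-- For every `α > 2` and `β > 0` there is `C > 0` such that every `s`-sparse finite set of
links of length at most `ℓ` (every square of side `ℓ` contains at most `s` link endpoints) can
be partitioned into at most `C·s` sets, each `β`-feasible under uniform power with zero
noise. -/
theorem sparse_links_few_slots (α β : ℝ) (hα : 2 < α) (hβ : 0 < β) :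
    ∃ C : ℝ, 0 < C ∧
      ∀ ℓ : ℝ, 0 < ℓ → ∀ s : ℕ, 0 < s →
      ∀ L : Finset (EuclideanSpace ℝ (Fin 2) × EuclideanSpace ℝ (Fin 2)),
        (∀ l ∈ L, l.1 ≠ l.2 ∧ dist l.1 l.2 ≤ ℓ) →
        (∀ a : EuclideanSpace ℝ (Fin 2),
          (L.filter (fun l => InSquare a ℓ l.1)).card +
            (L.filter (fun l => InSquare a ℓ l.2)).card ≤ s) →
        ∃ parts : Finset (Finset (EuclideanSpace ℝ (Fin 2) × EuclideanSpace ℝ (Fin 2))),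
          (parts.card : ℝ) ≤ C * s ∧
          (∀ p ∈ parts, UniformFeasible α β p) ∧
          (∀ p ∈ parts, p ⊆ L) ∧
          (∀ l ∈ L, ∃ p ∈ parts, l ∈ p) ∧
          (∀ p ∈ parts, ∀ q ∈ parts, p ≠ q → Disjoint p q) := by
  have hα0 : (0:ℝ) < α := by linarith
  set q : ℝ := α / 2 with hqdef
  have hq : 1 < q := by rw [hqdef]; linarith
  have hq0 : 0 < q := by linarith
  have hG : Summable (fun z : ℤ => (1 + |(z:ℝ)|) ^ (-q)) := summable_G hq
  have hGnn : ∀ z : ℤ, 0 ≤ (1 + |(z:ℝ)|) ^ (-q) :=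
    fun z => Real.rpow_nonneg (by positivity) _
  have hGG : Summable (fun w : ℤ × ℤ => (1 + |(w.1:ℝ)|) ^ (-q) * (1 + |(w.2:ℝ)|) ^ (-q)) :=
    hG.mul_of_nonneg hG (fun z => hGnn z) (fun z => hGnn z)
  set S : ℝ := ∑' w : ℤ × ℤ, (1 + |(w.1:ℝ)|) ^ (-q) * (1 + |(w.2:ℝ)|) ^ (-q) with hSdef
  have hS0 : 0 ≤ S := tsum_nonneg fun w => mul_nonneg (hGnn _) (hGnn _)
  have h4q : (0:ℝ) ≤ (4:ℝ) ^ q := Real.rpow_nonneg (by norm_num) _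
  set M : ℝ := β * (4:ℝ) ^ q * S with hMdef
  have hM0 : 0 ≤ M := by positivity
  set k : ℕ := 2 * ⌈M⌉₊ + 4 with hkdef
  have hk4 : (4:ℕ) ≤ k := by omega
  have hk4R : (4:ℝ) ≤ (k:ℝ) := by exact_mod_cast Nat.cast_le.2 hk4
  have hk0R : (0:ℝ) < (k:ℝ) := by linarith
  have hkhalf : (1:ℝ) ≤ (k:ℝ)/2 := by linarith
  have hkM : M ≤ ((k:ℝ)/2) ^ α := by
    have h1 : M ≤ (k:ℝ)/2 := by
      have h2 : M ≤ (⌈M⌉₊ : ℝ) := Nat.le_ceil M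
      have hc : ((2 * ⌈M⌉₊ + 4 : ℕ) : ℝ) = 2 * (⌈M⌉₊ : ℝ) + 4 := by push_cast; ring
      rw [hkdef, hc]
      nlinarith [Nat.cast_nonneg (α := ℝ) ⌈M⌉₊]
    calc M ≤ (k:ℝ)/2 := h1
    _ = ((k:ℝ)/2) ^ (1:ℝ) := (Real.rpow_one _).symm
    _ ≤ ((k:ℝ)/2) ^ α := Real.rpow_le_rpow_of_exponent_le hkhalf (by linarith)
  refine ⟨(k:ℝ)^2, by positivity, ?_⟩
  intro ℓ hℓ s hs L hlink hsparse
  set cell : (EuclideanSpace ℝ (Fin 2) × EuclideanSpace ℝ (Fin 2)) → ℤ × ℤ :=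
    fun l => (⌊l.1 0 / ℓ⌋, ⌊l.1 1 / ℓ⌋) with hcell
  set T : (EuclideanSpace ℝ (Fin 2) × EuclideanSpace ℝ (Fin 2)) →
      Finset (EuclideanSpace ℝ (Fin 2) × EuclideanSpace ℝ (Fin 2)) :=
    fun l => L.filter (fun l' => cell l' = cell l) with hT
  set gdx : (EuclideanSpace ℝ (Fin 2) × EuclideanSpace ℝ (Fin 2)) → ℕ :=
    fun l => rank (T l) l with hgdx
  set key : (EuclideanSpace ℝ (Fin 2) × EuclideanSpace ℝ (Fin 2)) → (ℤ × ℤ) × ℕ :=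
    fun l => (((cell l).1 % (k:ℤ), (cell l).2 % (k:ℤ)), gdx l) with hkey
  have hcellsq : ∀ l l' : EuclideanSpace ℝ (Fin 2) × EuclideanSpace ℝ (Fin 2),
      cell l' = cell l → InSquare (WithLp.toLp 2 (fun i => (⌊l.1 i / ℓ⌋ : ℝ) * ℓ)) ℓ l'.1 := by
    intro l l' hc i
    rw [hcell] at hc
    simp only [Prod.mk.injEq] at hc
    have h0 : ⌊l'.1 i / ℓ⌋ = ⌊l.1 i / ℓ⌋ := by
      fin_cases i
      · exact hc.1
      · exact hc.2
    obtain ⟨h1, h2⟩ := floor_bounds (x := l'.1 i) hℓ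
    simp only [PiLp.toLp_apply]
    rw [← h0]
    exact ⟨h1, h2.le⟩
  have hTcard : ∀ l ∈ L, (T l).card ≤ s := by
    intro l hl
    have hsub : T l ⊆ L.filter (fun l' => InSquare (WithLp.toLp 2 (fun i => (⌊l.1 i / ℓ⌋ : ℝ) * ℓ)) ℓ l'.1) := by
      intro l' hl'
      rw [hT] at hl'
      simp only [Finset.mem_filter] at hl' ⊢
      exact ⟨hl'.1, hcellsq l l' hl'.2⟩
    calc (T l).card ≤ _ := Finset.card_le_card hsub
    _ ≤ s := le_trans (Nat.le_add_right _ _) (hsparse (WithLp.toLp 2 (fun i => (⌊l.1 i / ℓ⌋ : ℝ) * ℓ)))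
  have hmemT : ∀ l ∈ L, l ∈ T l := by
    intro l hl; rw [hT]; simp [hl]
  have hgdx_lt : ∀ l ∈ L, gdx l < s := by
    intro l hl
    exact lt_of_lt_of_le (rank_lt_card (hmemT l hl)) (hTcard l hl)
  have hinj : ∀ l ∈ L, ∀ l' ∈ L, cell l = cell l' → gdx l = gdx l' → l = l' := by
    intro l hl l' hl' hc hg
    have hTT : T l' = T l := by rw [hT]; simp only; rw [hc]
    have hm : l ∈ T l := hmemT l hl
    have hm' : l' ∈ T l := by rw [← hTT]; exact hmemT l' hl'
    refine rank_inj hm hm' ?_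
    rw [hgdx] at hg; simp only at hg; rw [hTT] at hg; exact hg
  have hk0Z : ((k:ℤ)) ≠ 0 := by
    have : (0:ℤ) < (k:ℤ) := by exact_mod_cast (by omega : 0 < k)
    exact this.ne'
  have hk0Z' : (0:ℤ) < (k:ℤ) := by exact_mod_cast (by omega : 0 < k)
  refine ⟨(L.image key).image (fun κ => L.filter (fun l' => key l' = κ)), ?_, ?_, ?_, ?_, ?_⟩
  · -- cardinality
    have hsub2 : L.image key ⊆
        (Finset.Icc (0:ℤ) ((k:ℤ)-1) ×ˢ Finset.Icc (0:ℤ) ((k:ℤ)-1)) ×ˢ Finset.range s := by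
      intro κ hκ
      obtain ⟨l, hl, rfl⟩ := Finset.mem_image.1 hκ
      rw [hkey]
      simp only [Finset.mem_product, Finset.mem_Icc, Finset.mem_range]
      exact ⟨⟨⟨Int.emod_nonneg _ hk0Z, Int.le_sub_one_iff.2 (Int.emod_lt_of_pos _ hk0Z')⟩,
        Int.emod_nonneg _ hk0Z, Int.le_sub_one_iff.2 (Int.emod_lt_of_pos _ hk0Z')⟩,
        hgdx_lt l hl⟩
    have hcard : ((L.image key).image (fun κ => L.filter (fun l' => key l' = κ))).card
        ≤ k * k * s := by
      calc ((L.image key).image _).card ≤ (L.image key).card := Finset.card_image_le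
      _ ≤ ((Finset.Icc (0:ℤ) ((k:ℤ)-1) ×ˢ Finset.Icc (0:ℤ) ((k:ℤ)-1)) ×ˢ Finset.range s).card :=
          Finset.card_le_card hsub2
      _ = k * k * s := by
          rw [Finset.card_product, Finset.card_product, Int.card_Icc, Finset.card_range]
          simp
    calc (((L.image key).image (fun κ => L.filter (fun l' => key l' = κ))).card : ℝ)
        ≤ ((k * k * s : ℕ) : ℝ) := by exact_mod_cast hcard
    _ = (k:ℝ)^2 * s := by push_cast; ring
  · -- feasibility
    intro p hp
    obtain ⟨κ, hκmem, rfl⟩ := Finset.mem_image.1 hp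
    intro l hlp
    rw [Finset.mem_filter] at hlp
    obtain ⟨hlL, hlkey⟩ := hlp
    obtain ⟨hl_ne, hl_len⟩ := hlink l hlL
    have hdpos : 0 < dist l.1 l.2 := dist_pos.2 hl_ne
    set E := (L.filter (fun l' => key l' = κ)).erase l with hEdef
    have hEprop : ∀ l' ∈ E, l' ∈ L ∧ key l' = key l ∧ l' ≠ l := by
      intro l' h
      rw [hEdef, Finset.mem_erase, Finset.mem_filter] at h
      exact ⟨h.2.1, h.2.2.trans hlkey.symm, h.1⟩
    set v : (EuclideanSpace ℝ (Fin 2) × EuclideanSpace ℝ (Fin 2)) → ℤ × ℤ :=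
      fun l' => (((cell l').1 - (cell l).1) / (k:ℤ), ((cell l').2 - (cell l).2) / (k:ℤ))
      with hvdef
    have hvmul : ∀ l' ∈ E, (cell l').1 - (cell l).1 = (k:ℤ) * (v l').1 ∧
        (cell l').2 - (cell l).2 = (k:ℤ) * (v l').2 := by
      intro l' h
      obtain ⟨hL', hk', _⟩ := hEprop l' h
      rw [hkey] at hk'
      simp only [Prod.mk.injEq] at hk'
      have d1 : (k:ℤ) ∣ (cell l').1 - (cell l).1 :=
        Int.ModEq.dvd (show Int.ModEq (k:ℤ) ((cell l).1) ((cell l').1) from hk'.1.1.symm)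
      have d2 : (k:ℤ) ∣ (cell l').2 - (cell l).2 :=
        Int.ModEq.dvd (show Int.ModEq (k:ℤ) ((cell l).2) ((cell l').2) from hk'.1.2.symm)
      exact ⟨(Int.mul_ediv_cancel' d1).symm, (Int.mul_ediv_cancel' d2).symm⟩
    have hgdE : ∀ l' ∈ E, gdx l' = gdx l := by
      intro l' h
      obtain ⟨_, hk', _⟩ := hEprop l' h
      rw [hkey] at hk'
      simp only [Prod.mk.injEq] at hk'
      exact hk'.2
    have hcellE : ∀ l' ∈ E, (cell l').1 = (cell l).1 + (k:ℤ) * (v l').1 ∧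
        (cell l').2 = (cell l).2 + (k:ℤ) * (v l').2 := by
      intro l' h
      obtain ⟨h1, h2⟩ := hvmul l' h
      omega
    have hvne : ∀ l' ∈ E, v l' ≠ (0, 0) := by
      intro l' h hcontra
      obtain ⟨hL', _, hne⟩ := hEprop l' h
      obtain ⟨h1, h2⟩ := hcellE l' h
      rw [hcontra] at h1 h2
      simp at h1 h2
      have hceq : cell l = cell l' := by
        rw [Prod.ext_iff]; exact ⟨h1.symm, h2.symm⟩
      exact hne (hinj l' hL' l hlL (hceq.symm) (hgdE l' h) )
    have habs1 : ∀ l' ∈ E, (1:ℝ) ≤ max |(((v l').1):ℝ)| |(((v l').2):ℝ)| := by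
      intro l' h
      have hne := hvne l' h
      by_cases h1 : (v l').1 = 0
      · have h2 : (v l').2 ≠ 0 := fun h2 => hne (Prod.ext h1 h2)
        have : (1:ℤ) ≤ |(v l').2| := Int.one_le_abs h2
        have : (1:ℝ) ≤ |(((v l').2):ℝ)| := by
          rw [← Int.cast_abs]; exact_mod_cast this
        exact this.trans (le_max_right _ _)
      · have : (1:ℤ) ≤ |(v l').1| := Int.one_le_abs h1
        have : (1:ℝ) ≤ |(((v l').1):ℝ)| := by
          rw [← Int.cast_abs]; exact_mod_cast this
        exact this.trans (le_max_left _ _)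
    have hdistb : ∀ l' ∈ E, ((k:ℝ)/2 * ℓ) * max |(((v l').1):ℝ)| |(((v l').2):ℝ)| ≤ dist l'.1 l.2
        ∧ 0 < dist l'.1 l.2 := by
      intro l' h
      set mr : ℝ := max |(((v l').1):ℝ)| |(((v l').2):ℝ)| with hmr
      have hm1' : (1:ℝ) ≤ mr := habs1 l' h
      have hsep : ((k:ℝ) * mr - 1) * ℓ ≤ dist l'.1 l.1 := by
        rcases le_total |(((v l').1):ℝ)| |(((v l').2):ℝ)| with hv | hv
        · have hfl : ⌊l'.1 1 / ℓ⌋ - ⌊l.1 1 / ℓ⌋ = (k:ℤ) * (v l').2 := by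
            have h2 : (cell l').2 - (cell l).2 = (k:ℤ) * (v l').2 := (hvmul l' h).2
            rw [hcell] at h2; exact h2
          have hfs := floor_sep (x := l'.1 1) (y := l.1 1) hℓ
          rw [hfl] at hfs
          have habs : |(((k:ℤ) * (v l').2 : ℤ) : ℝ)| = (k:ℝ) * mr := by
            rw [Int.cast_mul, abs_mul, Int.cast_natCast, abs_of_pos hk0R, hmr,
              max_eq_right hv]
          rw [habs] at hfs
          calc ((k:ℝ) * mr - 1) * ℓ ≤ |l'.1 1 - l.1 1| := hfs
          _ ≤ dist l'.1 l.1 := coord_le_dist _ _ 1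
        · have hfl : ⌊l'.1 0 / ℓ⌋ - ⌊l.1 0 / ℓ⌋ = (k:ℤ) * (v l').1 := by
            have h2 : (cell l').1 - (cell l).1 = (k:ℤ) * (v l').1 := (hvmul l' h).1
            rw [hcell] at h2; exact h2
          have hfs := floor_sep (x := l'.1 0) (y := l.1 0) hℓ
          rw [hfl] at hfs
          have habs : |(((k:ℤ) * (v l').1 : ℤ) : ℝ)| = (k:ℝ) * mr := by
            rw [Int.cast_mul, abs_mul, Int.cast_natCast, abs_of_pos hk0R, hmr,
              max_eq_left hv]
          rw [habs] at hfs
          calc ((k:ℝ) * mr - 1) * ℓ ≤ |l'.1 0 - l.1 0| := hfs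
          _ ≤ dist l'.1 l.1 := coord_le_dist _ _ 0
      have htri : dist l'.1 l.1 ≤ dist l'.1 l.2 + dist l.1 l.2 := by
        calc dist l'.1 l.1 ≤ dist l'.1 l.2 + dist l.2 l.1 := dist_triangle _ _ _
        _ = dist l'.1 l.2 + dist l.1 l.2 := by rw [dist_comm l.2 l.1]
      have hge : ((k:ℝ) * mr - 2) * ℓ ≤ dist l'.1 l.2 := by nlinarith
      have hkm4 : (4:ℝ) ≤ (k:ℝ) * mr := by nlinarith
      constructor
      · nlinarith
      · nlinarith
    set B : ℝ := ((k:ℝ)/2 * ℓ)^(-α) with hBdef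
    have hBnn : 0 ≤ B := Real.rpow_nonneg (by positivity) _
    have hterm : ∀ l' ∈ E, (dist l'.1 l.2) ^ (-α) ≤
        B * ((4:ℝ)^q * ((1 + |(((v l').1):ℝ)|)^(-q) * (1 + |(((v l').2):ℝ)|)^(-q))) := by
      intro l' h
      obtain ⟨hge, hdp⟩ := hdistb l' h
      set a : ℝ := |(((v l').1):ℝ)| with hadef
      set b : ℝ := |(((v l').2):ℝ)| with hbdef
      set mr : ℝ := max a b with hmr
      have hm1' : (1:ℝ) ≤ mr := habs1 l' h
      have ha0 : 0 ≤ a := abs_nonneg _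
      have hb0 : 0 ≤ b := abs_nonneg _
      have ham : a ≤ mr := le_max_left _ _
      have hbm : b ≤ mr := le_max_right _ _
      have hmr0 : (0:ℝ) < mr := by linarith
      have hbase_pos : (0:ℝ) < (k:ℝ)/2 * ℓ * mr := by positivity
      have h1 : (dist l'.1 l.2) ^ (-α) ≤ ((k:ℝ)/2 * ℓ * mr) ^ (-α) :=
        Real.rpow_le_rpow_of_nonpos hbase_pos hge (by linarith)
      have h2 : ((k:ℝ)/2 * ℓ * mr) ^ (-α) = B * mr ^ (-α) := by
        rw [hBdef, ← Real.mul_rpow (by positivity) (by linarith)]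
      have h3 : mr ^ (-α) = (mr * mr) ^ (-q) := by
        rw [Real.mul_rpow hmr0.le hmr0.le, ← Real.rpow_add hmr0]
        congr 1
        rw [hqdef]; ring
      have h4 : (1 + a) * (1 + b) / 4 ≤ mr * mr := by nlinarith
      have h5 : (mr * mr) ^ (-q) ≤ ((1 + a) * (1 + b) / 4) ^ (-q) :=
        Real.rpow_le_rpow_of_nonpos (by positivity) h4 (by linarith)
      have h6 : ((1 + a) * (1 + b) / 4) ^ (-q) = (4:ℝ)^q * ((1 + a)^(-q) * (1 + b)^(-q)) := by
        rw [Real.div_rpow (by positivity) (by norm_num : (0:ℝ) ≤ 4),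
          Real.mul_rpow (by positivity) (by positivity),
          Real.rpow_neg (by norm_num : (0:ℝ) ≤ 4), div_inv_eq_mul]
        ring
      calc (dist l'.1 l.2) ^ (-α) ≤ ((k:ℝ)/2 * ℓ * mr) ^ (-α) := h1
      _ = B * mr ^ (-α) := h2
      _ = B * (mr * mr) ^ (-q) := by rw [h3]
      _ ≤ B * ((1 + a) * (1 + b) / 4) ^ (-q) := mul_le_mul_of_nonneg_left h5 hBnn
      _ = B * ((4:ℝ)^q * ((1 + a)^(-q) * (1 + b)^(-q))) := by rw [h6]
    -- injectivity of v on E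
    have hvinj : ∀ x ∈ E, ∀ y ∈ E, v x = v y → x = y := by
      intro x hx y hy hxy
      obtain ⟨hxL, hxk, _⟩ := hEprop x hx
      obtain ⟨hyL, hyk, _⟩ := hEprop y hy
      have hcx := hcellE x hx
      have hcy := hcellE y hy
      have hceq : cell x = cell y := by
        rw [Prod.ext_iff]
        constructor
        · rw [hcx.1, hcy.1, hxy]
        · rw [hcx.2, hcy.2, hxy]
      have hgxy : gdx x = gdx y := by
        rw [hgdE x hx, hgdE y hy]
      exact hinj x hxL y hyL hceq hgxy
    -- sum bound
    have hEsum : ∑ l' ∈ E, (1 + |(((v l').1):ℝ)|)^(-q) * (1 + |(((v l').2):ℝ)|)^(-q) ≤ S := by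
      have himg : ∑ l' ∈ E, (1 + |(((v l').1):ℝ)|)^(-q) * (1 + |(((v l').2):ℝ)|)^(-q)
          = ∑ w ∈ E.image v, (1 + |(w.1:ℝ)|)^(-q) * (1 + |(w.2:ℝ)|)^(-q) :=
        by rw [Finset.sum_image hvinj]
      rw [himg, hSdef]
      exact hGG.sum_le_tsum _ (fun w _ => mul_nonneg (hGnn _) (hGnn _))
    have hreal : β * ∑ l' ∈ E, (dist l'.1 l.2) ^ (-α) ≤ (dist l.1 l.2) ^ (-α) := by
      have hsum : ∑ l' ∈ E, (dist l'.1 l.2) ^ (-α) ≤ B * ((4:ℝ)^q * S) := by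
        calc ∑ l' ∈ E, (dist l'.1 l.2) ^ (-α)
            ≤ ∑ l' ∈ E, B * ((4:ℝ)^q * ((1 + |(((v l').1):ℝ)|)^(-q) *
              (1 + |(((v l').2):ℝ)|)^(-q))) := Finset.sum_le_sum hterm
        _ = B * ((4:ℝ)^q * ∑ l' ∈ E, (1 + |(((v l').1):ℝ)|)^(-q) *
              (1 + |(((v l').2):ℝ)|)^(-q)) := by
            rw [← Finset.mul_sum, ← Finset.mul_sum]
        _ ≤ B * ((4:ℝ)^q * S) :=
            mul_le_mul_of_nonneg_left (mul_le_mul_of_nonneg_left hEsum h4q) hBnn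
      have hsplit : B = ((k:ℝ)/2)^(-α) * ℓ^(-α) := by
        rw [hBdef, Real.mul_rpow (by linarith) hℓ.le]
      have hpow : (0:ℝ) < ((k:ℝ)/2)^α := Real.rpow_pos_of_pos (by linarith) _
      have hfrac : β * ((4:ℝ)^q * S) * ((k:ℝ)/2)^(-α) ≤ 1 := by
        rw [Real.rpow_neg (by linarith : (0:ℝ) ≤ (k:ℝ)/2), ← div_eq_mul_inv,
          div_le_one hpow]
        calc β * ((4:ℝ)^q * S) = M := by rw [hMdef]; ring
        _ ≤ ((k:ℝ)/2)^α := hkM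
      have hl1 : ℓ^(-α) ≤ (dist l.1 l.2)^(-α) :=
        Real.rpow_le_rpow_of_nonpos hdpos hl_len (by linarith)
      calc β * ∑ l' ∈ E, (dist l'.1 l.2) ^ (-α)
          ≤ β * (B * ((4:ℝ)^q * S)) := mul_le_mul_of_nonneg_left hsum hβ.le
      _ = (β * ((4:ℝ)^q * S) * ((k:ℝ)/2)^(-α)) * ℓ^(-α) := by rw [hsplit]; ring
      _ ≤ 1 * ℓ^(-α) := mul_le_mul_of_nonneg_right hfrac (Real.rpow_nonneg hℓ.le _)
      _ = ℓ^(-α) := one_mul _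
      _ ≤ (dist l.1 l.2)^(-α) := hl1
    have hEterm : ∀ l' ∈ E, ENNReal.ofReal (dist l'.1 l.2) ^ (-α)
        = ENNReal.ofReal ((dist l'.1 l.2) ^ (-α)) :=
      fun l' h => ENNReal.ofReal_rpow_of_pos (hdistb l' h).2
    calc ENNReal.ofReal β * ∑ l' ∈ E, ENNReal.ofReal (dist l'.1 l.2) ^ (-α)
        = ENNReal.ofReal β * ∑ l' ∈ E, ENNReal.ofReal ((dist l'.1 l.2) ^ (-α)) := by
          rw [Finset.sum_congr rfl hEterm]
    _ = ENNReal.ofReal (β * ∑ l' ∈ E, (dist l'.1 l.2) ^ (-α)) := by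
          rw [← ENNReal.ofReal_sum_of_nonneg (fun l' _ => Real.rpow_nonneg dist_nonneg _),
            ← ENNReal.ofReal_mul hβ.le]
    _ ≤ ENNReal.ofReal ((dist l.1 l.2) ^ (-α)) := ENNReal.ofReal_le_ofReal hreal
    _ = ENNReal.ofReal (dist l.1 l.2) ^ (-α) := (ENNReal.ofReal_rpow_of_pos hdpos).symm
  · -- subset
    intro p hp
    obtain ⟨κ, _, rfl⟩ := Finset.mem_image.1 hp
    exact Finset.filter_subset _ _
  · -- cover
    intro l hl
    refine ⟨L.filter (fun l' => key l' = key l), ?_, ?_⟩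
    · exact Finset.mem_image.2 ⟨key l, Finset.mem_image.2 ⟨l, hl, rfl⟩, rfl⟩
    · simp [hl]
  · -- disjoint
    intro p hp p' hp' hne
    obtain ⟨κ, _, rfl⟩ := Finset.mem_image.1 hp
    obtain ⟨κ', _, rfl⟩ := Finset.mem_image.1 hp'
    rw [Finset.disjoint_left]
    intro x hx hx'
    simp only [Finset.mem_filter] at hx hx'
    exact hne (by rw [← hx.2, ← hx'.2])
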